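/- There exist a rational point 𝐧 ∈ 𝐒¹_II ∩ ℚ² and a continuous bijection Φ : ℝ → 𝐒¹_II ∖ {𝐧} such that Φ maps √2ℚ onto (𝐒¹_II ∩ ℚ²) ∖ {𝐧} and, for every ξ ∈ ℝ ∖ √2ℚ, L_{(ℝ,√2ℚ)}(ξ) = 2 · L_{(𝐒¹_II, 𝐒¹_II∩ℚ²)}(Φ(ξ)). -/

import Mathlib

open Filter
open scoped ENNReal

/-- The Lagrange number of `P` with respect to the set `Z` of "rational points" with
height function `H`: the limsup, along the cofinite filter on `Z`, of
`1 / (H z * dist P z)`. -/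
noncomputable def lagrangeNumber {X : Type*} [MetricSpace X] (Z : Set X) (H : X → ℝ)
    (P : X) : ℝ≥0∞ :=
  Filter.limsup (fun z : Z => ENNReal.ofReal (1 / (H z * dist P (z : X)))) Filter.cofinite

/-- The set `√2·ℚ ⊆ ℝ`. -/
def sqrt2Q : Set ℝ := {x | ∃ q : ℚ, x = Real.sqrt 2 * q}

/-- The height function on `√2·ℚ`: writing `r = √2·p/q₁` with `p/q₁` reduced, the height
is `q₁²` if `q₁` is odd, and `q₁²/2 (= 2(q₁/2)²)` if `q₁` is even. -/
noncomputable def heightSqrt2Q (x : ℝ) : ℝ :=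
  letI := Classical.dec (∃ q : ℚ, x = Real.sqrt 2 * q)
  if h : ∃ q : ℚ, x = Real.sqrt 2 * q then
    (if h.choose.den % 2 = 1 then ((h.choose.den : ℝ)) ^ 2 else ((h.choose.den : ℝ)) ^ 2 / 2)
  else 1

/-- Points of `ℝ^l` with all coordinates rational. -/
def ratPts (l : ℕ) : Set (EuclideanSpace ℝ (Fin l)) := {v | ∀ i, ∃ q : ℚ, v i = (q : ℝ)}

/-- The height of a rational point of a sphere: writing it as `𝐩/q` with `𝐩 ∈ ℤ^l`,
`q ≥ 1`, `gcd(p₁,…,p_l,q) = 1`, the height is `q`, which equals the lcm of the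
denominators of the rational coordinates. -/
noncomputable def heightVec {l : ℕ} (v : EuclideanSpace ℝ (Fin l)) : ℝ :=
  letI := Classical.dec (∀ i, ∃ q : ℚ, v i = (q : ℝ))
  if h : ∀ i, ∃ q : ℚ, v i = (q : ℝ) then
    ((Finset.univ.lcm fun i => (h i).choose.den : ℕ) : ℝ)
  else 1

/-- The circle `𝐒¹_II = {(x₁,x₂) ∈ ℝ² : x₁² + x₂² = 2}`. -/
def S1II : Set (EuclideanSpace ℝ (Fin 2)) := {v | v 0 ^ 2 + v 1 ^ 2 = 2}

namespace S1Aux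

noncomputable def sq2 : ℝ := Real.sqrt 2

lemma sq2_sq : sq2 ^ 2 = 2 := Real.sq_sqrt (by norm_num)

lemma sq2_pos : 0 < sq2 := Real.sqrt_pos.mpr (by norm_num)

lemma sq2_ne : sq2 ≠ 0 := ne_of_gt sq2_pos

noncomputable def dd (x : ℝ) : ℝ := x ^ 2 + sq2 * x + 1

lemma dd_ge (x : ℝ) : (1:ℝ)/2 ≤ dd x := by
  have h := sq2_sq
  unfold dd
  nlinarith [sq_nonneg (x + sq2/2)]

lemma dd_pos (x : ℝ) : 0 < dd x := lt_of_lt_of_le (by norm_num) (dd_ge x)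

lemma dd_ne (x : ℝ) : dd x ≠ 0 := ne_of_gt (dd_pos x)

noncomputable def Phi (x : ℝ) : EuclideanSpace ℝ (Fin 2) :=
  (WithLp.equiv 2 (Fin 2 → ℝ)).symm ![(x ^ 2 - 1) / dd x, -(x ^ 2 + 2 * sq2 * x + 1) / dd x]

lemma Phi_apply0 (x : ℝ) : Phi x 0 = (x ^ 2 - 1) / dd x := rfl

lemma Phi_apply1 (x : ℝ) : Phi x 1 = -(x ^ 2 + 2 * sq2 * x + 1) / dd x := rfl

lemma Phi_mem (x : ℝ) : Phi x ∈ S1II := by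
  show (Phi x 0) ^ 2 + (Phi x 1) ^ 2 = 2
  rw [Phi_apply0, Phi_apply1, neg_div, neg_sq, div_pow, div_pow, ← add_div,
    div_eq_iff (pow_ne_zero 2 (dd_ne x))]
  unfold dd
  linear_combination (2 * x ^ 2) * sq2_sq

lemma dist_sq_Phi (a b : ℝ) :
    ((a ^ 2 - 1) / dd a - (b ^ 2 - 1) / dd b) ^ 2 +
      (-(a ^ 2 + 2 * sq2 * a + 1) / dd a - -(b ^ 2 + 2 * sq2 * b + 1) / dd b) ^ 2 =
      4 * (a - b) ^ 2 / (dd a * dd b) := by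
  have hda := dd_ne a
  have hdb := dd_ne b
  have key : ((a ^ 2 - 1) * dd b - dd a * (b ^ 2 - 1)) ^ 2 +
      (-(a ^ 2 + 2 * sq2 * a + 1) * dd b - dd a * -(b ^ 2 + 2 * sq2 * b + 1)) ^ 2 =
      4 * (a - b) ^ 2 * (dd a * dd b) := by
    unfold dd
    linear_combination (2*b^2 + -4*a*b + -4*a*b^3 + 2*a^2 + 8*a^2*b^2 + 2*a^2*b^4 + -4*a^3*b + -4*a^3*b^3 + 2*a^4*b^2) * sq2_sq
  rw [div_sub_div _ _ hda hdb, div_sub_div _ _ hda hdb, div_pow, div_pow, ← add_div, key]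
  rw [mul_pow, div_eq_div_iff (by positivity) (by positivity)]
  ring

lemma dist_Phi (a b : ℝ) :
    dist (Phi a) (Phi b) = 2 * |a - b| / Real.sqrt (dd a * dd b) := by
  rw [EuclideanSpace.dist_eq, Fin.sum_univ_two]
  simp only [Real.dist_eq, sq_abs]
  rw [show Phi a 0 = (a ^ 2 - 1) / dd a from rfl, show Phi a 1 = -(a ^ 2 + 2 * sq2 * a + 1) / dd a from rfl,
    show Phi b 0 = (b ^ 2 - 1) / dd b from rfl, show Phi b 1 = -(b ^ 2 + 2 * sq2 * b + 1) / dd b from rfl]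
  rw [dist_sq_Phi]
  have hprod : 0 < dd a * dd b := mul_pos (dd_pos a) (dd_pos b)
  rw [show (4 : ℝ) * (a - b) ^ 2 / (dd a * dd b) = (2 * |a - b| / Real.sqrt (dd a * dd b)) ^ 2 by
    rw [div_pow, mul_pow, sq_abs, Real.sq_sqrt hprod.le]
    ring]
  exact Real.sqrt_sq (by positivity)

end S1Aux
namespace S1Aux

lemma Phi_continuous : Continuous Phi := by
  have h1 : Continuous fun x : ℝ => (x ^ 2 - 1) / dd x := by
    apply Continuous.div (by fun_prop) ?_ fun x => dd_ne x
    unfold dd; fun_prop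
  have h2 : Continuous fun x : ℝ => -(x ^ 2 + 2 * sq2 * x + 1) / dd x := by
    apply Continuous.div (by fun_prop) ?_ fun x => dd_ne x
    unfold dd; fun_prop
  apply (PiLp.continuous_toLp 2 (fun _ : Fin 2 => ℝ)).comp
  apply continuous_pi
  intro i
  fin_cases i
  · simpa using h1
  · simpa using h2

lemma Phi_injective : Function.Injective Phi := by
  intro a b hab
  have h : dist (Phi a) (Phi b) = 0 := by rw [hab, dist_self]
  rw [dist_Phi] at h
  have hs : Real.sqrt (dd a * dd b) > 0 :=
    Real.sqrt_pos.mpr (mul_pos (dd_pos a) (dd_pos b))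
  have habs : |a - b| = 0 := by
    by_contra hne
    have : 2 * |a - b| / Real.sqrt (dd a * dd b) > 0 := by
      have : 0 < |a - b| := lt_of_le_of_ne (abs_nonneg _) (Ne.symm hne)
      positivity
    linarith
  have := abs_eq_zero.mp habs
  linarith [this]

noncomputable def nPt : EuclideanSpace ℝ (Fin 2) :=
  (WithLp.equiv 2 (Fin 2 → ℝ)).symm ![1, -1]

lemma nPt_apply0 : nPt 0 = 1 := rfl
lemma nPt_apply1 : nPt 1 = -1 := rfl

lemma Phi_ne_nPt (x : ℝ) : Phi x ≠ nPt := by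
  intro h
  have h0 : (x ^ 2 - 1) / dd x = 1 := congrArg (fun v : EuclideanSpace ℝ (Fin 2) => v 0) h
  have h1 : -(x ^ 2 + 2 * sq2 * x + 1) / dd x = -1 := congrArg (fun v : EuclideanSpace ℝ (Fin 2) => v 1) h
  rw [div_eq_one_iff_eq (dd_ne x)] at h0
  rw [div_eq_iff (dd_ne x)] at h1
  unfold dd at h0 h1
  have e0 : sq2 * x = -2 := by linarith
  have e1 : sq2 * x = 0 := by linarith
  rw [e0] at e1; norm_num at e1

lemma nPt_mem : nPt ∈ S1II := by
  show (nPt 0) ^ 2 + (nPt 1) ^ 2 = 2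
  rw [nPt_apply0, nPt_apply1]; norm_num

lemma nPt_ratPts : nPt ∈ ratPts 2 := by
  intro i
  fin_cases i
  · refine ⟨1, ?_⟩; show nPt 0 = ((1 : ℚ) : ℝ); rw [nPt_apply0]; norm_num
  · refine ⟨-1, ?_⟩; show nPt 1 = ((-1 : ℚ) : ℝ); rw [nPt_apply1]; norm_num

/-- Given a point of the circle other than `nPt`, the parameter mapping to it. -/
noncomputable def invPhi (x y : ℝ) : ℝ :=
  if x = 1 then -sq2 else ((y - 1) / (x - 1) - 1) / sq2

lemma Phi_invPhi {v : EuclideanSpace ℝ (Fin 2)} (hv : v ∈ S1II) (hn : v ≠ nPt) :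
    Phi (invPhi (v 0) (v 1)) = v := by
  have hxy : (v 0) ^ 2 + (v 1) ^ 2 = 2 := hv
  set x := v 0 with hx
  set y := v 1 with hy
  have hfun : ∀ a : ℝ, (a ^ 2 - 1) / dd a = x → -(a ^ 2 + 2 * sq2 * a + 1) / dd a = y →
      Phi a = v := by
    intro a h1 h2
    ext i
    fin_cases i
    · exact h1
    · exact h2
  unfold invPhi
  by_cases hx1 : x = 1
  · have hy2 : (y - 1) * (y + 1) = 0 := by rw [hx1] at hxy; nlinarith
    rcases mul_eq_zero.mp hy2 with hy1 | hy1
    · have hy1 : y = 1 := by linarith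
      rw [if_pos hx1]
      have hd : dd (-sq2) = 1 := by unfold dd; nlinarith [sq2_sq]
      apply hfun
      · rw [hd, neg_pow, sq2_sq]; norm_num [hx1]
      · rw [hd]
        have : -((-sq2) ^ 2 + 2 * sq2 * (-sq2) + 1) = 1 := by nlinarith [sq2_sq]
        rw [div_one, this, hy1]
    · exfalso
      apply hn
      have hy1 : y = -1 := by linarith
      ext i
      fin_cases i
      · exact hx1
      · exact hy1
  · rw [if_neg hx1]
    have hxne : x - 1 ≠ 0 := sub_ne_zero.mpr hx1
    set m := (y - 1) / (x - 1) with hm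
    have e1 : m * (x - 1) = y - 1 := div_mul_cancel₀ _ hxne
    have hmx : m ^ 2 - 2 * m - 1 = x * (m ^ 2 + 1) := by
      have h1 : (m ^ 2 - 2 * m - 1) * (x - 1) ^ 2 = x * (m ^ 2 + 1) * (x - 1) ^ 2 := by
        linear_combination (1 - x) * hxy +
          (2*(y-1) + (m*(x-1)-(y-1)) - 2*(x-1) - x*(m*(x-1)-(y-1)) - 2*x*(y-1)) * e1
      exact mul_right_cancel₀ (pow_ne_zero 2 hxne) h1
    have hmy : 1 - 2 * m - m ^ 2 = y * (m ^ 2 + 1) := by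
      have h1 : (1 - 2 * m - m ^ 2) * (x - 1) ^ 2 = y * (m ^ 2 + 1) * (x - 1) ^ 2 := by
        linear_combination (1 - y) * hxy +
          (-2*(x-1) - (m*(x-1)-(y-1)) - 2*(y-1) - y*(m*(x-1)-(y-1)) - 2*y*(y-1)) * e1
      exact mul_right_cancel₀ (pow_ne_zero 2 hxne) h1
    set a := (m - 1) / sq2 with ha
    have hsa : sq2 * a = m - 1 := by rw [ha, mul_comm]; exact div_mul_cancel₀ _ sq2_ne
    have ha2 : a ^ 2 = (m - 1) ^ 2 / 2 := by rw [ha, div_pow, sq2_sq]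
    have hdd : dd a = (m ^ 2 + 1) / 2 := by
      unfold dd; rw [ha2, hsa]; ring
    have hm1 : (m ^ 2 + 1) / 2 ≠ 0 := by positivity
    apply hfun
    · rw [hdd, ha2, div_eq_iff hm1]
      linear_combination (1/2 : ℝ) * hmx
    · have h2sa : 2 * sq2 * a = 2 * m - 2 := by rw [mul_assoc, hsa]; ring
      rw [hdd, ha2, h2sa, div_eq_iff hm1]
      linear_combination (1/2 : ℝ) * hmy

lemma Phi_range : Set.range Phi = S1II \ {nPt} := by
  apply Set.eq_of_subset_of_subset
  · rintro v ⟨a, rfl⟩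
    exact ⟨Phi_mem a, Phi_ne_nPt a⟩
  · rintro v ⟨hv, hn⟩
    exact ⟨invPhi (v 0) (v 1), Phi_invPhi hv hn⟩

end S1Aux
namespace S1Aux

lemma gcd_fin {g : ℕ} {a b : ℤ} (h1 : (g : ℤ) ∣ a) (h2 : (g : ℤ) ∣ b)
    (h : IsCoprime a b) : g = 1 := by
  have hu := h.isUnit_of_dvd' h1 h2
  rcases Int.isUnit_iff.mp hu with h' | h' <;> omega

lemma isCoprime_two_of_odd {A : ℤ} (hodd : A % 2 = 1) : IsCoprime A 2 :=
  ⟨1, -(A / 2), by omega⟩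

lemma isCoprime_pow_four {A B : ℤ} (h : IsCoprime A B) (hodd : A % 2 = 1) (m n : ℕ) :
    IsCoprime (A ^ m) (4 * B ^ n) := by
  have h2 : IsCoprime A 2 := isCoprime_two_of_odd hodd
  have h4 : IsCoprime (A ^ m) ((2:ℤ) ^ 2) := (h2.pow : IsCoprime (A ^ m) (2 ^ 2))
  have hBn : IsCoprime (A ^ m) (B ^ n) := h.pow
  have := h4.mul_right hBn
  rwa [show ((2:ℤ) ^ 2) * B ^ n = 4 * B ^ n by ring] at this

lemma gcd_A_odd (P Q : ℤ) (hco : IsCoprime P Q) (hodd : Q % 2 = 1) :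
    Int.gcd (2 * P ^ 2 - Q ^ 2) (2 * P ^ 2 + 2 * P * Q + Q ^ 2) = 1 := by
  set g := Int.gcd (2 * P ^ 2 - Q ^ 2) (2 * P ^ 2 + 2 * P * Q + Q ^ 2) with hg
  have ha : (g : ℤ) ∣ 2 * P ^ 2 - Q ^ 2 := Int.gcd_dvd_left _ _
  have hc : (g : ℤ) ∣ 2 * P ^ 2 + 2 * P * Q + Q ^ 2 := Int.gcd_dvd_right _ _
  have hQ3 : (g : ℤ) ∣ Q ^ 3 := by
    have h : Q ^ 3 = (Q - P) * ((2 * P ^ 2 + 2 * P * Q + Q ^ 2) - (2 * P ^ 2 - Q ^ 2)) +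
        Q * (2 * P ^ 2 - Q ^ 2) := by ring
    rw [h]
    exact dvd_add ((dvd_sub hc ha).mul_left _) (ha.mul_left _)
  have hP4 : (g : ℤ) ∣ 4 * P ^ 4 := by
    have h : 4 * P ^ 4 = (2 * P ^ 2 - Q ^ 2) * (2 * P ^ 2 + Q ^ 2) + Q * Q ^ 3 := by ring
    rw [h]
    exact dvd_add (ha.mul_right _) (hQ3.mul_left _)
  exact gcd_fin hQ3 hP4 (isCoprime_pow_four hco.symm hodd 3 4)

lemma gcd_B_odd (P Q : ℤ) (hco : IsCoprime P Q) (hodd : Q % 2 = 1) :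
    Int.gcd (2 * P ^ 2 + 4 * P * Q + Q ^ 2) (2 * P ^ 2 + 2 * P * Q + Q ^ 2) = 1 := by
  set g := Int.gcd (2 * P ^ 2 + 4 * P * Q + Q ^ 2) (2 * P ^ 2 + 2 * P * Q + Q ^ 2) with hg
  have hb : (g : ℤ) ∣ 2 * P ^ 2 + 4 * P * Q + Q ^ 2 := Int.gcd_dvd_left _ _
  have hc : (g : ℤ) ∣ 2 * P ^ 2 + 2 * P * Q + Q ^ 2 := Int.gcd_dvd_right _ _
  have hW : (g : ℤ) ∣ 2 * P ^ 2 + Q ^ 2 := by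
    have h : 2 * P ^ 2 + Q ^ 2 = 2 * (2 * P ^ 2 + 2 * P * Q + Q ^ 2) -
        (2 * P ^ 2 + 4 * P * Q + Q ^ 2) := by ring
    rw [h]; exact dvd_sub (hc.mul_left _) hb
  have hE : (g : ℤ) ∣ 2 * P * Q := by
    have h : 2 * P * Q = (2 * P ^ 2 + 4 * P * Q + Q ^ 2) -
        (2 * P ^ 2 + 2 * P * Q + Q ^ 2) := by ring
    rw [h]; exact dvd_sub hb hc
  have hQ3 : (g : ℤ) ∣ Q ^ 3 := by
    have h : Q ^ 3 = Q * (2 * P ^ 2 + Q ^ 2) - P * (2 * P * Q) := by ring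
    rw [h]; exact dvd_sub (hW.mul_left _) (hE.mul_left _)
  have hP3 : (g : ℤ) ∣ 4 * P ^ 3 := by
    have h : 4 * P ^ 3 = 2 * P * (2 * P ^ 2 + Q ^ 2) - Q * (2 * P * Q) := by ring
    rw [h]; exact dvd_sub (hW.mul_left _) (hE.mul_left _)
  exact gcd_fin hQ3 hP3 (isCoprime_pow_four hco.symm hodd 3 3)

lemma gcd_A_even (P q : ℤ) (hco : IsCoprime P q) (hodd : P % 2 = 1) :
    Int.gcd (P ^ 2 - 2 * q ^ 2) (P ^ 2 + 2 * P * q + 2 * q ^ 2) = 1 := by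
  set g := Int.gcd (P ^ 2 - 2 * q ^ 2) (P ^ 2 + 2 * P * q + 2 * q ^ 2) with hg
  have ha : (g : ℤ) ∣ P ^ 2 - 2 * q ^ 2 := Int.gcd_dvd_left _ _
  have hc : (g : ℤ) ∣ P ^ 2 + 2 * P * q + 2 * q ^ 2 := Int.gcd_dvd_right _ _
  have hq3 : (g : ℤ) ∣ 4 * q ^ 3 := by
    have h : 4 * q ^ 3 = (2 * q - P) * ((P ^ 2 + 2 * P * q + 2 * q ^ 2) - (P ^ 2 - 2 * q ^ 2)) +
        2 * q * (P ^ 2 - 2 * q ^ 2) := by ring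
    rw [h]
    exact dvd_add ((dvd_sub hc ha).mul_left _) (ha.mul_left _)
  have hP4 : (g : ℤ) ∣ P ^ 4 := by
    have h : P ^ 4 = (P ^ 2 - 2 * q ^ 2) * (P ^ 2 + 2 * q ^ 2) + q * (4 * q ^ 3) := by ring
    rw [h]
    exact dvd_add (ha.mul_right _) (hq3.mul_left _)
  exact gcd_fin hP4 hq3 (isCoprime_pow_four hco hodd 4 3)

lemma gcd_B_even (P q : ℤ) (hco : IsCoprime P q) (hodd : P % 2 = 1) :
    Int.gcd (P ^ 2 + 4 * P * q + 2 * q ^ 2) (P ^ 2 + 2 * P * q + 2 * q ^ 2) = 1 := by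
  set g := Int.gcd (P ^ 2 + 4 * P * q + 2 * q ^ 2) (P ^ 2 + 2 * P * q + 2 * q ^ 2) with hg
  have hb : (g : ℤ) ∣ P ^ 2 + 4 * P * q + 2 * q ^ 2 := Int.gcd_dvd_left _ _
  have hc : (g : ℤ) ∣ P ^ 2 + 2 * P * q + 2 * q ^ 2 := Int.gcd_dvd_right _ _
  have hW : (g : ℤ) ∣ P ^ 2 + 2 * q ^ 2 := by
    have h : P ^ 2 + 2 * q ^ 2 = 2 * (P ^ 2 + 2 * P * q + 2 * q ^ 2) -
        (P ^ 2 + 4 * P * q + 2 * q ^ 2) := by ring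
    rw [h]; exact dvd_sub (hc.mul_left _) hb
  have hE : (g : ℤ) ∣ 2 * P * q := by
    have h : 2 * P * q = (P ^ 2 + 4 * P * q + 2 * q ^ 2) - (P ^ 2 + 2 * P * q + 2 * q ^ 2) := by
      ring
    rw [h]; exact dvd_sub hb hc
  have hq3 : (g : ℤ) ∣ 4 * q ^ 3 := by
    have h : 4 * q ^ 3 = 2 * q * (P ^ 2 + 2 * q ^ 2) - P * (2 * P * q) := by ring
    rw [h]; exact dvd_sub (hW.mul_left _) (hE.mul_left _)
  have hP3 : (g : ℤ) ∣ P ^ 3 := by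
    have h : P ^ 3 = P * (P ^ 2 + 2 * q ^ 2) - q * (2 * P * q) := by ring
    rw [h]; exact dvd_sub (hW.mul_left _) (hE.mul_left _)
  exact gcd_fin hP3 hq3 (isCoprime_pow_four hco hodd 3 3)

end S1Aux
namespace S1Aux

lemma dd_sq2_mul (r : ℝ) : dd (sq2 * r) = 2 * r ^ 2 + 2 * r + 1 := by
  unfold dd; linear_combination (r ^ 2 + r) * sq2_sq

lemma pos2 (r : ℝ) : 0 < 2 * r ^ 2 + 2 * r + 1 := by nlinarith [sq_nonneg (2 * r + 1)]

lemma coord0 (r : ℝ) : Phi (sq2 * r) 0 = (2 * r ^ 2 - 1) / (2 * r ^ 2 + 2 * r + 1) := by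
  rw [Phi_apply0, dd_sq2_mul]
  congr 1
  linear_combination (r ^ 2) * sq2_sq

lemma coord1 (r : ℝ) : Phi (sq2 * r) 1 = -(2 * r ^ 2 + 4 * r + 1) / (2 * r ^ 2 + 2 * r + 1) := by
  rw [Phi_apply1, dd_sq2_mul]
  congr 2
  linear_combination (r ^ 2 + 2 * r) * sq2_sq

lemma height_val (t : ℚ) : heightSqrt2Q (sq2 * (t : ℝ)) =
    if t.den % 2 = 1 then ((t.den : ℝ)) ^ 2 else ((t.den : ℝ)) ^ 2 / 2 := by
  have hmem : ∃ q : ℚ, (sq2 * (t : ℝ)) = Real.sqrt 2 * (q : ℝ) := ⟨t, rfl⟩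
  unfold heightSqrt2Q
  rw [dif_pos hmem]
  have hch : hmem.choose = t := by
    have h := hmem.choose_spec
    have : (t : ℝ) = (hmem.choose : ℝ) := mul_left_cancel₀ sq2_ne h
    exact_mod_cast this.symm
  rw [hch]

lemma height_pos (t : ℚ) : 0 < heightSqrt2Q (sq2 * (t : ℝ)) := by
  rw [height_val]
  have : (0 : ℝ) < (t.den : ℝ) := by
    exact_mod_cast t.pos
  split <;> positivity

lemma ratData (t : ℚ) : ∃ (x y : ℚ) (C : ℕ), 0 < C ∧ x.den = C ∧ y.den = C ∧
    ((x : ℝ) = Phi (sq2 * (t : ℝ)) 0) ∧ ((y : ℝ) = Phi (sq2 * (t : ℝ)) 1) ∧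
    (C : ℝ) = heightSqrt2Q (sq2 * (t : ℝ)) * dd (sq2 * (t : ℝ)) := by
  have hQ0 : t.den ≠ 0 := t.den_nz
  have hQr : ((t.den : ℕ) : ℝ) ≠ 0 := Nat.cast_ne_zero.mpr hQ0
  have htr : (t : ℝ) = ((t.num : ℤ) : ℝ) / ((t.den : ℕ) : ℝ) := Rat.cast_def t
  have htP : (t : ℝ) * ((t.den : ℕ) : ℝ) = ((t.num : ℤ) : ℝ) := by
    rw [htr]; exact div_mul_cancel₀ _ hQr
  have hcopN : Nat.Coprime t.num.natAbs t.den := t.reduced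
  have hcopI : IsCoprime t.num ((t.den : ℤ)) := by
    rw [Int.isCoprime_iff_gcd_eq_one]
    simpa [Int.gcd] using hcopN
  set P : ℤ := t.num with hP
  by_cases hpar : t.den % 2 = 1
  · -- odd denominator
    have hoddZ : (t.den : ℤ) % 2 = 1 := by omega
    set Aint : ℤ := 2 * P ^ 2 - (t.den : ℤ) ^ 2 with hA
    set Bint : ℤ := -(2 * P ^ 2 + 4 * P * (t.den : ℤ) + (t.den : ℤ) ^ 2) with hB
    set Cint : ℤ := 2 * P ^ 2 + 2 * P * (t.den : ℤ) + (t.den : ℤ) ^ 2 with hC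
    have hQ1 : (1 : ℤ) ≤ (t.den : ℤ) := by omega
    have hCpos : 0 < Cint := by nlinarith [sq_nonneg (2 * P + (t.den : ℤ)), sq_nonneg P, sq_nonneg (P + (t.den : ℤ))]
    set Cnat : ℕ := Cint.natAbs with hCn
    have hCcast : (Cnat : ℤ) = Cint := Int.natAbs_of_nonneg hCpos.le
    have hCnat0 : Cnat ≠ 0 := by omega
    have hCnpos : 0 < Cnat := by omega
    have hgA : Aint.natAbs.Coprime Cnat := gcd_A_odd P (t.den : ℤ) hcopI hoddZ
    have hgB : Bint.natAbs.Coprime Cnat := by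
      have h := gcd_B_odd P (t.den : ℤ) hcopI hoddZ
      have hnb : Bint.natAbs = (2 * P ^ 2 + 4 * P * (t.den : ℤ) + (t.den : ℤ) ^ 2).natAbs := by
        rw [hB]; exact Int.natAbs_neg _
      unfold Nat.Coprime
      rw [hnb]
      exact h
    refine ⟨⟨Aint, Cnat, hCnat0, hgA⟩, ⟨Bint, Cnat, hCnat0, hgB⟩, Cnat, Nat.pos_of_ne_zero hCnat0,
      rfl, rfl, ?_, ?_, ?_⟩
    · rw [Rat.cast_def]
      show ((Aint : ℝ) / (Cnat : ℝ)) = _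
      rw [coord0]
      have hCr : (Cnat : ℝ) = 2 * (P : ℝ) ^ 2 + 2 * (P : ℝ) * ((t.den : ℕ) : ℝ) +
          ((t.den : ℕ) : ℝ) ^ 2 := by exact_mod_cast hCcast
      have hCrpos : (0 : ℝ) < (Cnat : ℝ) := by exact_mod_cast hCnpos
      rw [div_eq_div_iff hCrpos.ne' (pos2 (t : ℝ)).ne']
      rw [hCr, hA]
      push_cast
      rw [← htP]
      ring
    · rw [Rat.cast_def]
      show ((Bint : ℝ) / (Cnat : ℝ)) = _
      rw [coord1]
      have hCr : (Cnat : ℝ) = 2 * (P : ℝ) ^ 2 + 2 * (P : ℝ) * ((t.den : ℕ) : ℝ) +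
          ((t.den : ℕ) : ℝ) ^ 2 := by exact_mod_cast hCcast
      have hCrpos : (0 : ℝ) < (Cnat : ℝ) := by exact_mod_cast hCnpos
      rw [div_eq_div_iff hCrpos.ne' (pos2 (t : ℝ)).ne']
      rw [hCr, hB]
      push_cast
      rw [← htP]
      ring
    · rw [height_val, if_pos hpar, dd_sq2_mul]
      have hCr : (Cnat : ℝ) = 2 * (P : ℝ) ^ 2 + 2 * (P : ℝ) * ((t.den : ℕ) : ℝ) +
          ((t.den : ℕ) : ℝ) ^ 2 := by exact_mod_cast hCcast
      rw [hCr, ← htP]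
      ring
  · -- even denominator
    set qn : ℕ := t.den / 2 with hqn
    have hq2 : t.den = 2 * qn := by omega
    have hQq : ((t.den : ℤ)) = 2 * (qn : ℤ) := by omega
    have hPodd : P % 2 = 1 := by
      have h2d : (2 : ℕ) ∣ t.den := by omega
      have hnd : ¬ ((2:ℕ) ∣ P.natAbs) := by
        intro hdvd
        have hdg : 2 ∣ Nat.gcd P.natAbs t.den := Nat.dvd_gcd hdvd h2d
        have hg1 : Nat.gcd P.natAbs t.den = 1 := hcopN
        omega
      omega
    have hPq : IsCoprime P (qn : ℤ) := by
      have : IsCoprime P (2 * (qn : ℤ)) := by rwa [hQq] at hcopI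
      exact this.of_mul_right_right
    set Aint : ℤ := P ^ 2 - 2 * (qn : ℤ) ^ 2 with hA
    set Bint : ℤ := -(P ^ 2 + 4 * P * (qn : ℤ) + 2 * (qn : ℤ) ^ 2) with hB
    set Cint : ℤ := P ^ 2 + 2 * P * (qn : ℤ) + 2 * (qn : ℤ) ^ 2 with hC
    have hP0 : P ≠ 0 := by omega
    have hP2 : (1 : ℤ) ≤ P ^ 2 := by
      rcases lt_or_gt_of_ne hP0 with h | h
      · nlinarith
      · nlinarith
    have hCpos : 0 < Cint := by nlinarith [sq_nonneg (P + 2 * (qn : ℤ)), hP2]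
    set Cnat : ℕ := Cint.natAbs with hCn
    have hCcast : (Cnat : ℤ) = Cint := Int.natAbs_of_nonneg hCpos.le
    have hCnat0 : Cnat ≠ 0 := by omega
    have hCnpos : 0 < Cnat := by omega
    have hgA : Aint.natAbs.Coprime Cnat := gcd_A_even P (qn : ℤ) hPq hPodd
    have hgB : Bint.natAbs.Coprime Cnat := by
      have h := gcd_B_even P (qn : ℤ) hPq hPodd
      have hnb : Bint.natAbs = (P ^ 2 + 4 * P * (qn : ℤ) + 2 * (qn : ℤ) ^ 2).natAbs := by
        rw [hB]; exact Int.natAbs_neg _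
      unfold Nat.Coprime
      rw [hnb]
      exact h
    have hQrq : ((t.den : ℕ) : ℝ) = 2 * ((qn : ℕ) : ℝ) := by exact_mod_cast hq2
    have htP2 : (t : ℝ) * (2 * ((qn : ℕ) : ℝ)) = ((P : ℤ) : ℝ) := by rw [← hQrq]; exact htP
    have hCr : (Cnat : ℝ) = (P : ℝ) ^ 2 + 2 * (P : ℝ) * ((qn : ℕ) : ℝ) +
        2 * ((qn : ℕ) : ℝ) ^ 2 := by exact_mod_cast hCcast
    have hCrpos : (0 : ℝ) < (Cnat : ℝ) := by exact_mod_cast hCnpos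
    refine ⟨⟨Aint, Cnat, hCnat0, hgA⟩, ⟨Bint, Cnat, hCnat0, hgB⟩, Cnat, Nat.pos_of_ne_zero hCnat0,
      rfl, rfl, ?_, ?_, ?_⟩
    · rw [Rat.cast_def]
      show ((Aint : ℝ) / (Cnat : ℝ)) = _
      rw [coord0, div_eq_div_iff hCrpos.ne' (pos2 (t : ℝ)).ne', hCr, hA]
      push_cast
      rw [← htP2]
      ring
    · rw [Rat.cast_def]
      show ((Bint : ℝ) / (Cnat : ℝ)) = _
      rw [coord1, div_eq_div_iff hCrpos.ne' (pos2 (t : ℝ)).ne', hCr, hB]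
      push_cast
      rw [← htP2]
      ring
    · rw [height_val, if_neg hpar, dd_sq2_mul, hCr, hQrq, ← htP2]
      ring

end S1Aux
namespace S1Aux

lemma ratPts_Phi (t : ℚ) : Phi (sq2 * (t : ℝ)) ∈ ratPts 2 := by
  obtain ⟨x, y, C, hCpos, hxd, hyd, hx, hy, hC⟩ := ratData t
  intro i
  fin_cases i
  · exact ⟨x, hx.symm⟩
  · exact ⟨y, hy.symm⟩

lemma heightVec_Phi (t : ℚ) :
    heightVec (Phi (sq2 * (t : ℝ))) = heightSqrt2Q (sq2 * (t : ℝ)) * dd (sq2 * (t : ℝ)) := by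
  obtain ⟨x, y, C, hCpos, hxd, hyd, hx, hy, hC⟩ := ratData t
  have hrat : ∀ i : Fin 2, ∃ q : ℚ, Phi (sq2 * (t : ℝ)) i = (q : ℝ) := by
    intro i
    fin_cases i
    · exact ⟨x, hx.symm⟩
    · exact ⟨y, hy.symm⟩
  unfold heightVec
  rw [dif_pos hrat]
  have e0 : (hrat 0).choose = x := Rat.cast_injective ((hrat 0).choose_spec.symm.trans hx.symm)
  have e1 : (hrat 1).choose = y := Rat.cast_injective ((hrat 1).choose_spec.symm.trans hy.symm)
  have hl : (Finset.univ.lcm fun i => (hrat i).choose.den) = C := by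
    have hu : (Finset.univ : Finset (Fin 2)) = {0, 1} := rfl
    rw [hu, Finset.lcm_insert, Finset.lcm_singleton, e0, e1, hxd, hyd]
    simp [Nat.lcm_self]
  rw [hl, hC]

lemma Phi_image : Phi '' sqrt2Q = (S1II ∩ ratPts 2) \ {nPt} := by
  apply Set.eq_of_subset_of_subset
  · rintro v ⟨z, ⟨t, rfl⟩, rfl⟩
    exact ⟨⟨Phi_mem _, ratPts_Phi t⟩, Phi_ne_nPt _⟩
  · rintro v ⟨⟨hv, hrat⟩, hn⟩
    have hn' : v ≠ nPt := hn
    refine ⟨invPhi (v 0) (v 1), ?_, Phi_invPhi hv hn'⟩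
    obtain ⟨x0, hx0⟩ := hrat 0
    obtain ⟨y0, hy0⟩ := hrat 1
    unfold invPhi
    by_cases hx1 : v 0 = 1
    · rw [if_pos hx1]
      refine ⟨-1, ?_⟩
      push_cast
      show -sq2 = sq2 * (-1 : ℝ)
      ring
    · rw [if_neg hx1]
      have hx0ne : x0 ≠ 1 := by
        intro h; apply hx1; rw [hx0, h]; norm_num
      refine ⟨((y0 - 1) / (x0 - 1) - 1) / 2, ?_⟩
      have hcast : (((((y0 - 1) / (x0 - 1) - 1) / 2 : ℚ)) : ℝ) =
          (((y0 : ℝ) - 1) / ((x0 : ℝ) - 1) - 1) / 2 := by push_cast; ring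
      rw [hcast, hx0, hy0]
      rw [show Real.sqrt 2 = sq2 from rfl]
      rw [div_eq_iff sq2_ne]
      linear_combination (-(((y0:ℝ) - 1) / ((x0:ℝ) - 1) - 1) / 2) * sq2_sq

end S1Aux
namespace S1Aux

lemma map_cofinite_eq {α β : Type*} {f : α → β} (hf : Function.Injective f)
    (hr : (Set.range f)ᶜ.Finite) : Filter.map f Filter.cofinite = Filter.cofinite := by
  apply le_antisymm hf.tendsto_cofinite
  intro s hs
  -- hs : f ⁻¹' s ∈ cofinite, show s ∈ cofinite
  rw [Filter.mem_cofinite] at *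
  have h1 : sᶜ ⊆ f '' (f ⁻¹' sᶜ) ∪ (Set.range f)ᶜ := by
    intro x hx
    by_cases hxr : x ∈ Set.range f
    · obtain ⟨a, rfl⟩ := hxr
      exact Or.inl ⟨a, hx, rfl⟩
    · exact Or.inr hxr
  apply Set.Finite.subset _ h1
  apply Set.Finite.union _ hr
  apply Set.Finite.image
  rwa [Set.preimage_compl]

lemma limsup_le_of_ev {Z : Type*} {l : Filter Z} {A B : Z → ℝ≥0∞}
    (h : ∀ c ε : ℝ, 1 < c → 0 < ε →
      ∀ᶠ z in l, A z ≤ ENNReal.ofReal c * B z ⊔ ENNReal.ofReal ε) :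
    Filter.limsup A l ≤ Filter.limsup B l := by
  set L := Filter.limsup B l with hLdef
  rcases eq_top_or_lt_top L with hL | hL
  · rw [hL]; exact le_top
  have step : ∀ c : ℝ, 1 < c → Filter.limsup A l ≤ ENNReal.ofReal c * L := by
    intro c hc
    have hc0 : (0:ℝ) < c := by linarith
    have hcL : ENNReal.ofReal c * L ≠ ⊤ := ENNReal.mul_ne_top ENNReal.ofReal_ne_top hL.ne
    refine ENNReal.le_of_forall_pos_le_add fun δ hδ _ => ?_
    have hδr : (0:ℝ) < (δ:ℝ) := hδ
    have hδ2 : (0:ℝ) < (δ:ℝ)/2 := by positivity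
    have hev1 := h c ((δ:ℝ)/2) hc hδ2
    have he2pos : ENNReal.ofReal ((δ:ℝ)/(2*c)) ≠ 0 := by
      simp only [ne_eq, ENNReal.ofReal_eq_zero, not_le]
      positivity
    have hb : ∀ᶠ z in l, B z < L + ENNReal.ofReal ((δ:ℝ)/(2*c)) :=
      Filter.eventually_lt_of_limsup_lt (ENNReal.lt_add_right hL.ne he2pos)
    have he2eq : ENNReal.ofReal c * ENNReal.ofReal ((δ:ℝ)/(2*c)) = ENNReal.ofReal ((δ:ℝ)/2) := by
      rw [← ENNReal.ofReal_mul hc0.le]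
      congr 1
      field_simp
    have hev : ∀ᶠ z in l, A z ≤ ENNReal.ofReal c * L + ↑δ := by
      filter_upwards [hev1, hb] with z h1 h2
      calc A z ≤ ENNReal.ofReal c * B z ⊔ ENNReal.ofReal ((δ:ℝ)/2) := h1
        _ ≤ ENNReal.ofReal c * (L + ENNReal.ofReal ((δ:ℝ)/(2*c))) ⊔ ENNReal.ofReal ((δ:ℝ)/2) :=
            sup_le_sup_right (mul_le_mul_right h2.le _) _
        _ ≤ (ENNReal.ofReal c * L + ENNReal.ofReal ((δ:ℝ)/2)) + ENNReal.ofReal ((δ:ℝ)/2) := by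
            apply sup_le
            · rw [mul_add, he2eq]
              exact le_add_right le_rfl
            · exact le_add_self
        _ = ENNReal.ofReal c * L + ↑δ := by
            rw [add_assoc, ← ENNReal.ofReal_add hδ2.le hδ2.le]
            congr 1
            rw [show (δ:ℝ)/2 + (δ:ℝ)/2 = (δ:ℝ) by ring]
            exact ENNReal.ofReal_coe_nnreal
    exact Filter.limsup_le_of_le (by isBoundedDefault) hev
  refine ENNReal.le_of_forall_pos_le_add fun δ hδ _ => ?_
  have hδr : (0:ℝ) < (δ:ℝ) := hδ
  set Lr : ℝ := L.toReal with hLrdef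
  have hLr : (0:ℝ) ≤ Lr := ENNReal.toReal_nonneg
  have hx : (0:ℝ) < (δ:ℝ)/(Lr+1) := by positivity
  have hc : (1:ℝ) < 1 + (δ:ℝ)/(Lr+1) := by linarith
  have hLeq : L = ENNReal.ofReal Lr := (ENNReal.ofReal_toReal hL.ne).symm
  calc Filter.limsup A l ≤ ENNReal.ofReal (1 + (δ:ℝ)/(Lr+1)) * L := step _ hc
    _ = L + ENNReal.ofReal ((δ:ℝ)/(Lr+1)) * L := by
        rw [ENNReal.ofReal_add (by norm_num) hx.le, add_mul, ENNReal.ofReal_one, one_mul]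
    _ ≤ L + ↑δ := by
        apply add_le_add_right
        rw [hLeq, ← ENNReal.ofReal_mul hx.le]
        calc ENNReal.ofReal ((δ:ℝ)/(Lr+1) * Lr) ≤ ENNReal.ofReal (δ:ℝ) := by
              apply ENNReal.ofReal_le_ofReal
              rw [div_mul_eq_mul_div, div_le_iff₀ (by positivity)]
              nlinarith
          _ = ↑δ := ENNReal.ofReal_coe_nnreal

lemma limsup_eq_of_ev {Z : Type*} {l : Filter Z} {A B : Z → ℝ≥0∞}
    (h1 : ∀ c ε : ℝ, 1 < c → 0 < ε →
      ∀ᶠ z in l, A z ≤ ENNReal.ofReal c * B z ⊔ ENNReal.ofReal ε)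
    (h2 : ∀ c ε : ℝ, 1 < c → 0 < ε →
      ∀ᶠ z in l, B z ≤ ENNReal.ofReal c * A z ⊔ ENNReal.ofReal ε) :
    Filter.limsup A l = Filter.limsup B l :=
  le_antisymm (limsup_le_of_ev h1) (limsup_le_of_ev h2)

end S1Aux
namespace S1Aux

lemma finite_rat (D : ℕ) (M : ℝ) : {t : ℚ | t.den ≤ D ∧ |(t.num : ℝ)| ≤ M}.Finite := by
  apply Set.Finite.of_finite_image (f := fun t : ℚ => (t.num, t.den))
  · apply Set.Finite.subset ((Set.finite_Icc (-(⌈M⌉)) ⌈M⌉).prod (Set.finite_Iic D))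
    rintro ⟨n, d⟩ ⟨t, ⟨hd, hn⟩, heq⟩
    obtain ⟨h1, h2⟩ := Prod.mk.injEq .. ▸ heq
    subst h1; subst h2
    constructor
    · have habs : |t.num| ≤ ⌈M⌉ := by
        have h3 : ((|t.num| : ℤ) : ℝ) ≤ M := by push_cast; exact hn
        exact_mod_cast h3.trans (Int.le_ceil M)
      exact Set.mem_Icc.mpr (abs_le.mp habs)
    · exact hd
  · intro t1 _ t2 _ h
    obtain ⟨h1, h2⟩ := Prod.mk.injEq .. ▸ h
    exact Rat.ext h1 h2

noncomputable def tOf (z : ↥sqrt2Q) : ℚ := z.2.choose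

lemma tOf_spec (z : ↥sqrt2Q) : (z : ℝ) = sq2 * ((tOf z : ℚ) : ℝ) := z.2.choose_spec

lemma tOf_inj : Function.Injective tOf := by
  intro z1 z2 h
  apply Subtype.ext
  rw [tOf_spec z1, tOf_spec z2, h]

lemma sq2_ge_one : (1:ℝ) ≤ sq2 := by nlinarith [sq2_sq, sq2_pos]

lemma height_ge_one (t : ℚ) : 1 ≤ heightSqrt2Q (sq2 * (t : ℝ)) := by
  rw [height_val]
  have h1 : 1 ≤ t.den := t.pos
  split_ifs with h
  · have : (1:ℝ) ≤ (t.den : ℝ) := by exact_mod_cast h1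
    nlinarith
  · have h2 : 2 ≤ t.den := by omega
    have : (2:ℝ) ≤ (t.den : ℝ) := by exact_mod_cast h2
    nlinarith

lemma height_ge_den (t : ℚ) : ((t.den : ℝ)) ^ 2 / 2 ≤ heightSqrt2Q (sq2 * (t : ℝ)) := by
  rw [height_val]
  have : (0:ℝ) ≤ (t.den : ℝ) := by positivity
  split_ifs with h
  · nlinarith
  · exact le_refl _

lemma finite_bad (ξ : ℝ) (θ δ : ℝ) (hθ : 0 < θ) (hδ : 0 < δ) :
    {z : ↥sqrt2Q | δ ≤ dist ξ (z : ℝ) ∧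
      θ ≤ 1 / (heightSqrt2Q (z : ℝ) * dist ξ (z : ℝ))}.Finite := by
  set D : ℕ := ⌈Real.sqrt (2 / (θ * δ))⌉₊ with hD
  set M : ℝ := (|ξ| + 1 / θ) * D with hM
  apply Set.Finite.of_finite_image (f := tOf) ?_ tOf_inj.injOn
  apply Set.Finite.subset (finite_rat D M)
  rintro t ⟨z, ⟨hzd, hzθ⟩, rfl⟩
  have hspec := tOf_spec z
  set t := tOf z with ht
  have hH1 : 1 ≤ heightSqrt2Q (z : ℝ) := by rw [hspec]; exact height_ge_one _
  have hHden : ((t.den : ℝ)) ^ 2 / 2 ≤ heightSqrt2Q (z : ℝ) := by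
    rw [hspec]; exact height_ge_den _
  set H := heightSqrt2Q (z : ℝ) with hHdef
  set d := dist ξ (z : ℝ) with hd
  have hdpos : 0 < d := lt_of_lt_of_le hδ hzd
  have hHpos : (0:ℝ) < H := lt_of_lt_of_le one_pos hH1
  have hHd : H * d ≤ 1 / θ := by
    rw [le_div_iff₀ (by positivity)] at hzθ
    rw [le_div_iff₀ hθ]
    nlinarith
  have hHb : H ≤ 1 / (θ * δ) := by
    rw [le_div_iff₀ (by positivity)]
    have hHd' : H * d * θ ≤ 1 := by rwa [le_div_iff₀ hθ] at hHd
    nlinarith [mul_nonneg (mul_nonneg hHpos.le hθ.le) (sub_nonneg.mpr hzd)]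
  have hdb : d ≤ 1 / θ := by
    have hHd' : H * d * θ ≤ 1 := by rwa [le_div_iff₀ hθ] at hHd
    rw [le_div_iff₀ hθ]
    nlinarith [mul_nonneg (mul_nonneg hdpos.le hθ.le) (sub_nonneg.mpr hH1)]
  constructor
  · -- denominator bound
    have hden2 : ((t.den : ℝ)) ^ 2 ≤ 2 / (θ * δ) := by
      rw [le_div_iff₀ (by positivity)]
      rw [le_div_iff₀ (by positivity)] at hHb
      nlinarith
    have hdenr : (t.den : ℝ) ≤ Real.sqrt (2 / (θ * δ)) := by
      rw [show ((t.den:ℝ)) = Real.sqrt (((t.den:ℝ))^2) from (Real.sqrt_sq (by positivity)).symm]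
      exact Real.sqrt_le_sqrt hden2
    have : (t.den : ℝ) ≤ (D : ℝ) := hdenr.trans (Nat.le_ceil _)
    exact_mod_cast this
  · -- numerator bound
    have hzb : |(z : ℝ)| ≤ |ξ| + 1 / θ := by
      have h1 : |(z : ℝ)| - |ξ| ≤ |(z : ℝ) - ξ| := abs_sub_abs_le_abs_sub _ _
      have h2 : |(z : ℝ) - ξ| = d := by rw [hd, Real.dist_eq, abs_sub_comm]
      linarith
    have htb : |((t : ℚ) : ℝ)| ≤ |(z : ℝ)| := by
      have h1 : |(z : ℝ)| = sq2 * |((t : ℚ) : ℝ)| := by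
        rw [hspec, abs_mul, abs_of_pos sq2_pos]
      nlinarith [sq2_ge_one, abs_nonneg ((t : ℚ) : ℝ)]
    have hnum : |(t.num : ℝ)| = |((t : ℚ) : ℝ)| * (t.den : ℝ) := by
      have hden0 : ((t.den : ℕ) : ℝ) ≠ 0 := Nat.cast_ne_zero.mpr t.den_nz
      rw [Rat.cast_def t, abs_div, abs_of_nonneg (by positivity : (0:ℝ) ≤ ((t.den:ℕ):ℝ))]
      field_simp
    rw [hnum, hM]
    have hdenD : (t.den : ℝ) ≤ (D : ℝ) := by
      have hden2 : ((t.den : ℝ)) ^ 2 ≤ 2 / (θ * δ) := by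
        rw [le_div_iff₀ (by positivity)]
        rw [le_div_iff₀ (by positivity)] at hHb
        nlinarith
      have hdenr : (t.den : ℝ) ≤ Real.sqrt (2 / (θ * δ)) := by
        rw [show ((t.den:ℝ)) = Real.sqrt (((t.den:ℝ))^2) from (Real.sqrt_sq (by positivity)).symm]
        exact Real.sqrt_le_sqrt hden2
      exact hdenr.trans (Nat.le_ceil _)
    have h0 : (0:ℝ) ≤ |ξ| + 1/θ := by positivity
    have h1 : |((t : ℚ) : ℝ)| ≤ |ξ| + 1/θ := htb.trans hzb
    apply mul_le_mul h1 hdenD (by positivity) h0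

end S1Aux
namespace S1Aux

lemma height_pos' (z : ↥sqrt2Q) : 0 < heightSqrt2Q (z : ℝ) := by
  rw [tOf_spec z]; exact height_pos _

lemma sqrtdd_pos (x : ℝ) : 0 < Real.sqrt (dd x) := Real.sqrt_pos.mpr (dd_pos x)

lemma main_limsup (ξ : ℝ) (hξ : ξ ∉ sqrt2Q) :
    lagrangeNumber sqrt2Q heightSqrt2Q ξ =
      ENNReal.ofReal 2 * lagrangeNumber (S1II ∩ ratPts 2) heightVec (Phi ξ) := by
  classical
  have hmemF : ∀ z : ↥sqrt2Q, Phi (z : ℝ) ∈ S1II ∩ ratPts 2 := fun z =>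
    ⟨Phi_mem _, by rw [tOf_spec z]; exact ratPts_Phi _⟩
  set F : ↥sqrt2Q → ↥(S1II ∩ ratPts 2) := fun z => ⟨Phi (z : ℝ), hmemF z⟩ with hFdef
  have hFinj : Function.Injective F := fun a b hab =>
    Subtype.ext (Phi_injective (congrArg Subtype.val hab))
  have hnmem : nPt ∈ S1II ∩ ratPts 2 := ⟨nPt_mem, nPt_ratPts⟩
  have hFrange : (Set.range F)ᶜ.Finite := by
    apply Set.Finite.subset (Set.finite_singleton (⟨nPt, hnmem⟩ : ↥(S1II ∩ ratPts 2)))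
    intro v hv
    simp only [Set.mem_compl_iff, Set.mem_range] at hv
    by_contra hne
    simp only [Set.mem_singleton_iff] at hne
    have hvne : (v : EuclideanSpace ℝ (Fin 2)) ≠ nPt := fun h => hne (Subtype.ext h)
    have hmem : (v : EuclideanSpace ℝ (Fin 2)) ∈ Phi '' sqrt2Q := by
      rw [Phi_image]; exact ⟨v.2, hvne⟩
    obtain ⟨z, hz, heq⟩ := hmem
    exact hv ⟨⟨z, hz⟩, Subtype.ext heq⟩
  -- transfer the circle-side limsup to an index over sqrt2Q
  have htrans : Filter.limsup
      (fun v : ↥(S1II ∩ ratPts 2) =>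
        ENNReal.ofReal (1 / (heightVec (v : EuclideanSpace ℝ (Fin 2)) *
          dist (Phi ξ) (v : EuclideanSpace ℝ (Fin 2))))) Filter.cofinite =
      Filter.limsup (fun z : ↥sqrt2Q =>
        ENNReal.ofReal (1 / (heightVec (Phi (z : ℝ)) * dist (Phi ξ) (Phi (z : ℝ)))))
        Filter.cofinite := by
    conv_lhs => rw [← map_cofinite_eq hFinj hFrange]
    rw [← Filter.limsup_comp]
    rfl
  -- notation for the two sides
  set T : ↥sqrt2Q → ℝ≥0∞ := fun z =>
    ENNReal.ofReal (1 / (heightSqrt2Q (z : ℝ) * dist ξ (z : ℝ))) with hT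
  set A : ↥sqrt2Q → ℝ≥0∞ := fun z =>
    ENNReal.ofReal 2 *
      ENNReal.ofReal (1 / (heightVec (Phi (z : ℝ)) * dist (Phi ξ) (Phi (z : ℝ)))) with hA
  have hgoal2 : ENNReal.ofReal 2 * lagrangeNumber (S1II ∩ ratPts 2) heightVec (Phi ξ) =
      Filter.limsup A Filter.cofinite := by
    rw [lagrangeNumber, htrans]
    exact (ENNReal.limsup_const_mul_of_ne_top (by simp)).symm
  rw [hgoal2]
  show Filter.limsup T Filter.cofinite = Filter.limsup A Filter.cofinite
  -- basic positivity facts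
  have hne : ∀ z : ↥sqrt2Q, ξ ≠ (z : ℝ) := by
    intro z h
    exact hξ (h ▸ z.2)
  have hdistpos : ∀ z : ↥sqrt2Q, 0 < dist ξ (z : ℝ) := fun z => dist_pos.mpr (hne z)
  set r : ↥sqrt2Q → ℝ := fun z => 1 / (heightSqrt2Q (z : ℝ) * dist ξ (z : ℝ)) with hr
  have hrpos : ∀ z, 0 < r z := fun z => by
    have := height_pos' z
    have := hdistpos z
    positivity
  set ρ : ↥sqrt2Q → ℝ := fun z => Real.sqrt (dd ξ / dd (z : ℝ)) with hρ
  have hρpos : ∀ z, 0 < ρ z := fun z =>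
    Real.sqrt_pos.mpr (div_pos (dd_pos ξ) (dd_pos _))
  -- the exact term identity
  have hreal : ∀ z : ↥sqrt2Q,
      2 * (1 / (heightVec (Phi (z : ℝ)) * dist (Phi ξ) (Phi (z : ℝ)))) = ρ z * r z := by
    intro z
    have hhv : heightVec (Phi (z : ℝ)) = heightSqrt2Q (z : ℝ) * dd (z : ℝ) := by
      conv_lhs => rw [tOf_spec z]
      rw [heightVec_Phi, ← tOf_spec z]
    rw [hhv, dist_Phi, hρ, hr]
    simp only []
    rw [Real.dist_eq, Real.sqrt_div (dd_pos ξ).le, Real.sqrt_mul (dd_pos ξ).le]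
    have h3 : Real.sqrt (dd (z : ℝ)) ^ 2 = dd (z : ℝ) := Real.sq_sqrt (dd_pos _).le
    have hb0 : Real.sqrt (dd (z : ℝ)) ≠ 0 := (sqrtdd_pos _).ne'
    have ha0 : Real.sqrt (dd ξ) ≠ 0 := (sqrtdd_pos _).ne'
    have hH0 : heightSqrt2Q (z : ℝ) ≠ 0 := (height_pos' z).ne'
    have habs : |ξ - (z : ℝ)| ≠ 0 := abs_ne_zero.mpr (sub_ne_zero.mpr (hne z))
    rw [← h3]
    field_simp
    ring_nf
    rw [Real.sq_sqrt (by positivity)]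
  have hAz : ∀ z, A z = ENNReal.ofReal (ρ z * r z) := by
    intro z
    rw [hA]
    simp only []
    rw [← ENNReal.ofReal_mul (by norm_num : (0:ℝ) ≤ 2), hreal z]
  have hTz : ∀ z, T z = ENNReal.ofReal (r z) := fun z => rfl
  -- global bound for ρ
  set K : ℝ := Real.sqrt (2 * dd ξ) with hK
  have hKpos : 0 < K := Real.sqrt_pos.mpr (by have := dd_pos ξ; linarith)
  have hρK : ∀ z, ρ z ≤ K := by
    intro z
    apply Real.sqrt_le_sqrt
    rw [div_le_iff₀ (dd_pos _)]
    have h1 := dd_ge (z : ℝ)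
    have h2 := dd_pos ξ
    nlinarith
  -- continuity of ρ at ξ
  have hcont : ContinuousAt (fun η : ℝ => Real.sqrt (dd ξ / dd η)) ξ := by
    apply Real.continuous_sqrt.continuousAt.comp
    apply ContinuousAt.div continuousAt_const ?_ (dd_ne ξ)
    unfold dd; fun_prop
  have hval : Real.sqrt (dd ξ / dd ξ) = 1 := by rw [div_self (dd_ne ξ), Real.sqrt_one]
  -- the two eventual bounds
  have hev1 : ∀ c ε : ℝ, 1 < c → 0 < ε →
      ∀ᶠ z in Filter.cofinite, A z ≤ ENNReal.ofReal c * T z ⊔ ENNReal.ofReal ε := by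
    intro c ε hc hε
    obtain ⟨δ, hδpos, hδ⟩ := Metric.continuousAt_iff.mp hcont (c - 1) (by linarith)
    rw [Filter.eventually_cofinite]
    apply Set.Finite.subset (finite_bad ξ (ε / K) δ (by positivity) hδpos)
    intro z hz
    simp only [Set.mem_setOf_eq] at hz ⊢
    have hno1 : ¬ A z ≤ ENNReal.ofReal c * T z := fun h => hz (h.trans le_sup_left)
    have hno2 : ¬ A z ≤ ENNReal.ofReal ε := fun h => hz (h.trans le_sup_right)
    constructor
    · by_contra hlt
      push_neg at hlt
      have hd2 : dist (z : ℝ) ξ < δ := by rw [dist_comm]; exact hlt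
      have := hδ hd2
      rw [hval, Real.dist_eq] at this
      have hρc : ρ z ≤ c := by
        have := abs_lt.mp this
        rw [hρ]; simp only []
        linarith [this.2]
      apply hno1
      rw [hAz, hTz, ← ENNReal.ofReal_mul (by linarith : (0:ℝ) ≤ c)]
      exact ENNReal.ofReal_le_ofReal (mul_le_mul_of_nonneg_right hρc (hrpos z).le)
    · by_contra hlt
      push_neg at hlt
      apply hno2
      rw [hAz]
      apply ENNReal.ofReal_le_ofReal
      calc ρ z * r z ≤ K * r z := mul_le_mul_of_nonneg_right (hρK z) (hrpos z).le
        _ ≤ K * (ε / K) := mul_le_mul_of_nonneg_left hlt.le hKpos.le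
        _ = ε := by field_simp
  have hev2 : ∀ c ε : ℝ, 1 < c → 0 < ε →
      ∀ᶠ z in Filter.cofinite, T z ≤ ENNReal.ofReal c * A z ⊔ ENNReal.ofReal ε := by
    intro c ε hc hε
    have hc0 : (0:ℝ) < c := by linarith
    have hc1 : (0:ℝ) < 1 - 1/c := by
      rw [sub_pos, div_lt_one hc0]; exact hc
    obtain ⟨δ, hδpos, hδ⟩ := Metric.continuousAt_iff.mp hcont (1 - 1/c) hc1
    rw [Filter.eventually_cofinite]
    apply Set.Finite.subset (finite_bad ξ ε δ hε hδpos)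
    intro z hz
    simp only [Set.mem_setOf_eq] at hz ⊢
    have hno1 : ¬ T z ≤ ENNReal.ofReal c * A z := fun h => hz (h.trans le_sup_left)
    have hno2 : ¬ T z ≤ ENNReal.ofReal ε := fun h => hz (h.trans le_sup_right)
    constructor
    · by_contra hlt
      push_neg at hlt
      have hd2 : dist (z : ℝ) ξ < δ := by rw [dist_comm]; exact hlt
      have := hδ hd2
      rw [hval, Real.dist_eq] at this
      have hρc : 1/c ≤ ρ z := by
        have := abs_lt.mp this
        rw [hρ]; simp only []
        linarith [this.1]
      apply hno1
      rw [hAz, hTz, ← ENNReal.ofReal_mul hc0.le]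
      apply ENNReal.ofReal_le_ofReal
      have : 1 ≤ c * ρ z := by
        rw [div_le_iff₀ hc0] at hρc
        linarith [hρc]
      calc r z = 1 * r z := (one_mul _).symm
        _ ≤ (c * ρ z) * r z := mul_le_mul_of_nonneg_right this (hrpos z).le
        _ = c * (ρ z * r z) := by ring
    · by_contra hlt
      push_neg at hlt
      exact hno2 (ENNReal.ofReal_le_ofReal hlt.le)
  exact limsup_eq_of_ev hev2 hev1

end S1Aux

/-- Theorem 1.1(b): there exist a rational point `𝐧 ∈ 𝐒¹_II ∩ ℚ²` and a continuous
bijection `Φ : ℝ → 𝐒¹_II ∖ {𝐧}` mapping `√2ℚ` onto `(𝐒¹_II ∩ ℚ²) ∖ {𝐧}` such that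
`L_(ℝ,√2ℚ)(ξ) = 2 · L_(𝐒¹_II, 𝐒¹_II∩ℚ²)(Φ ξ)` for all `ξ ∈ ℝ ∖ √2ℚ`. -/
theorem lagrange_S1II :
    ∃ n ∈ S1II ∩ ratPts 2, ∃ Φ : ℝ → EuclideanSpace ℝ (Fin 2),
      Continuous Φ ∧ Function.Injective Φ ∧ Set.range Φ = S1II \ {n} ∧
      Φ '' sqrt2Q = (S1II ∩ ratPts 2) \ {n} ∧
      ∀ ξ : ℝ, ξ ∉ sqrt2Q →
        lagrangeNumber sqrt2Q heightSqrt2Q ξ =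
          ENNReal.ofReal 2 *
            lagrangeNumber (S1II ∩ ratPts 2) heightVec (Φ ξ) := by
  exact ⟨S1Aux.nPt, ⟨S1Aux.nPt_mem, S1Aux.nPt_ratPts⟩, S1Aux.Phi, S1Aux.Phi_continuous,
    S1Aux.Phi_injective, S1Aux.Phi_range, S1Aux.Phi_image,
    fun ξ hξ => S1Aux.main_limsup ξ hξ⟩
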